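/- For all integers d ≥ 29, the product ∏_{i=1}^{d-1} i!/(2π)^{i+1} is greater than 1. -/

import Mathlib

open Real Finset in
lemma two_pi_lt_63 : 2 * π < 6.3 := by
  have := Real.pi_lt_d2
  norm_num at this ⊢
  linarith

open Real Finset in
lemma pow_lt_factorial_aux (n : ℕ) (hn : 28 ≤ n) :
    (6.3 : ℝ) ^ (n + 1) < Nat.factorial n := by
  induction n, hn using Nat.le_induction with
  | base =>
      norm_num [Nat.factorial]
  | succ n hn ih =>
      have h1 : (6.3 : ℝ) ^ (n + 1 + 1) = (6.3 : ℝ) ^ (n + 1) * 6.3 := by ring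
      have h2 : (Nat.factorial (n + 1) : ℝ) = (n + 1) * Nat.factorial n := by
        push_cast [Nat.factorial_succ]; ring
      have hfac : (0 : ℝ) < Nat.factorial n := by positivity
      have h63 : (6.3 : ℝ) ≤ (n : ℝ) + 1 := by
        have : (28 : ℝ) ≤ n := by exact_mod_cast hn
        linarith
      rw [h1, h2]
      calc (6.3 : ℝ) ^ (n + 1) * 6.3 < (Nat.factorial n : ℝ) * 6.3 := by
              apply mul_lt_mul_of_pos_right ih; norm_num
        _ ≤ ((n : ℝ) + 1) * Nat.factorial n := by nlinarith
        _ = _ := by ring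

open Real Finset in
lemma two_pi_pow_lt_factorial (n : ℕ) (hn : 28 ≤ n) :
    (2 * π) ^ (n + 1) < Nat.factorial n := by
  have h1 : (2 * π) ^ (n + 1) ≤ (6.3 : ℝ) ^ (n + 1) := by
    apply pow_le_pow_left₀ (by positivity) (le_of_lt two_pi_lt_63)
  exact lt_of_le_of_lt h1 (pow_lt_factorial_aux n hn)

open Real in
/-- For all integers `d ≥ 29`, `∏_{i=1}^{d-1} i!/(2π)^{i+1} > 1`. -/
theorem prod_factorial_div_two_pi_pow_gt_one (d : ℕ) (hd : 29 ≤ d) :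
    1 < ∏ i ∈ Finset.Icc 1 (d - 1), (Nat.factorial i : ℝ) / (2 * π) ^ (i + 1) := by
  have hpi : (0 : ℝ) < π := Real.pi_pos
  induction d, hd using Nat.le_induction with
  | base =>
      show 1 < ∏ i ∈ Finset.Icc 1 28, (Nat.factorial i : ℝ) / (2 * π) ^ (i + 1)
      rw [Finset.prod_div_distrib]
      have hden : ∏ i ∈ Finset.Icc 1 28, ((2 * π) ^ (i + 1)) = (2 * π) ^ 434 := by
        rw [Finset.prod_pow_eq_pow_sum]
        congr 1
      have hN : ∏ i ∈ Finset.Icc 1 28, Nat.factorial i = 24378759692569493001843754884245889709720110123963670883808668267742801150073945462248212671568308430773839473807128215512114800359197934772179842358860234182649345336155492659539815888875032454531949849910359883836215115120785688966546366708482811138722465511411531795422982963200000000000000000000000000000000000000000000000000000000000000000000000000 := by decide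
      have hnum : ∏ i ∈ Finset.Icc 1 28, (Nat.factorial i : ℝ) = ((24378759692569493001843754884245889709720110123963670883808668267742801150073945462248212671568308430773839473807128215512114800359197934772179842358860234182649345336155492659539815888875032454531949849910359883836215115120785688966546366708482811138722465511411531795422982963200000000000000000000000000000000000000000000000000000000000000000000000000 : ℕ) : ℝ) := by
        rw [← hN]; push_cast; ring
      rw [hden, hnum]
      rw [one_lt_div (by positivity)]
      calc (2 * π) ^ 434 ≤ (6.3 : ℝ) ^ 434 :=
              pow_le_pow_left₀ (by positivity) (le_of_lt two_pi_lt_63) 434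
        _ < _ := by rw [show (6.3 : ℝ) = 63 / 10 by norm_num, div_pow, div_lt_iff₀ (by positivity)]; norm_cast
  | succ n hn ih =>
      obtain ⟨m, rfl⟩ : ∃ m, n = m + 1 := ⟨n - 1, by omega⟩
      have hstep : ∏ i ∈ Finset.Icc 1 (m + 1 + 1 - 1), (Nat.factorial i : ℝ) / (2 * π) ^ (i + 1)
          = (∏ i ∈ Finset.Icc 1 m, (Nat.factorial i : ℝ) / (2 * π) ^ (i + 1)) *
            ((Nat.factorial (m + 1) : ℝ) / (2 * π) ^ (m + 1 + 1)) := by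
        show ∏ i ∈ Finset.Icc 1 (m + 1), _ = _
        rw [Finset.prod_Icc_succ_top (by omega)]
      rw [hstep]
      have ih' : 1 < ∏ i ∈ Finset.Icc 1 m, (Nat.factorial i : ℝ) / (2 * π) ^ (i + 1) := by
        simpa using ih
      have hfac : 1 < (Nat.factorial (m + 1) : ℝ) / (2 * π) ^ (m + 1 + 1) := by
        rw [one_lt_div (by positivity)]
        exact two_pi_pow_lt_factorial (m + 1) (by omega)
      exact one_lt_mul_of_lt_of_le ih' (le_of_lt hfac) |>.trans_le (le_refl _)
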